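/- Let A be a commutative ring, r ∈ ℕ, and let h be a nonzero formal power series in A[[x_1,...,x_r]] (i.e. a nonzero element of MvPowerSeries over r variables with coefficients in A). Then there exist a finite set S ⊆ ℕ^r and, for each m ∈ S, a power series g_m ∈ A[[x_1,...,x_r]] whose constant coefficient is nonzero, such that h = ∑_{m∈S} x^m·g_m, where x^m denotes the monomial x_1^{m_1}···x_r^{m_r}. -/

import Mathlib

/-- primitive decomposition of a power series, the engine behind
Lemma 14.5.1.21.  A nonzero formal power series `h ∈ A[[x₁,…,x_r]]` can be written as a
finite sum `h = ∑_{m ∈ S} x^m · g_m` where each `g_m` is a power series with nonzero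
constant coefficient. -/
theorem MvPowerSeries.exists_primitive_decomposition
    {A : Type*} [CommRing A] (r : ℕ)
    (h : MvPowerSeries (Fin r) A) (hne : h ≠ 0) :
    ∃ (S : Finset (Fin r →₀ ℕ)) (g : (Fin r →₀ ℕ) → MvPowerSeries (Fin r) A),
      (∀ m ∈ S, MvPowerSeries.constantCoeff (g m) ≠ 0) ∧
      h = ∑ m ∈ S, MvPowerSeries.monomial m (1 : A) * g m := by
  classical
  set supp : Set (Fin r →₀ ℕ) := {n | MvPowerSeries.coeff n h ≠ 0} with hsupp
  -- every element of the support dominates a minimal element of the support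
  have hmin : ∀ n ∈ supp, ∃ m, Minimal (· ∈ supp) m ∧ m ≤ n := by
    intro n hn
    have hwf : WellFoundedLT (Fin r →₀ ℕ) := inferInstance
    obtain ⟨m, hm, hmmin⟩ := hwf.wf.has_min {k ∈ supp | k ≤ n} ⟨n, hn, le_rfl⟩
    refine ⟨m, ⟨hm.1, fun y hy hym => ?_⟩, hm.2⟩
    by_contra hmy
    exact hmmin y ⟨hy, hym.trans hm.2⟩ (lt_of_le_not_ge hym hmy)
  -- the set of minimal elements of the support is finite (Dickson's lemma)
  have hanti : IsAntichain (· ≤ ·) {m | Minimal (· ∈ supp) m} := by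
    intro a ha b hb hab hle
    exact hab (le_antisymm hle (hb.2 ha.1 hle))
  have hfin : {m | Minimal (· ∈ supp) m}.Finite := by
    refine hanti.finite_of_partiallyWellOrderedOn ?_
    exact Set.PartiallyWellOrderedOn.mono (Set.isPWO_of_wellQuasiOrderedLE supp) (fun m hm => hm.1)
  -- for each n in the support, choose a minimal element below it
  choose ch hch1 hch2 using hmin
  set c : (Fin r →₀ ℕ) → (Fin r →₀ ℕ) := fun n =>
    if hn : n ∈ supp then ch n hn else n with hc
  have hcmem : ∀ n (hn : n ∈ supp), c n ∈ supp := fun n hn => by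
    simp only [hc, dif_pos hn]; exact (hch1 n hn).1
  have hcle : ∀ n (hn : n ∈ supp), c n ≤ n := fun n hn => by
    simp only [hc, dif_pos hn]; exact hch2 n hn
  have hcmin : ∀ n (hn : n ∈ supp), Minimal (· ∈ supp) (c n) := fun n hn => by
    simp only [hc, dif_pos hn]; exact hch1 n hn
  have hcfix : ∀ m, Minimal (· ∈ supp) m → c m = m := by
    intro m hm
    exact le_antisymm (hcle m hm.1) (hm.2 (hcmem m hm.1) (hcle m hm.1))
  set g : (Fin r →₀ ℕ) → MvPowerSeries (Fin r) A := fun m k =>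
    if c (m + k) = m then MvPowerSeries.coeff (m + k) h else 0 with hg
  refine ⟨hfin.toFinset, g, ?_, ?_⟩
  · intro m hm
    rw [Set.Finite.mem_toFinset] at hm
    have : (MvPowerSeries.constantCoeff) (g m)
        = if c (m + 0) = m then MvPowerSeries.coeff (m + 0) h else 0 := rfl
    rw [this]
    simp only [add_zero, hcfix m hm, if_pos rfl]
    exact hm.1
  · ext n
    rw [map_sum]
    have hterm : ∀ m, MvPowerSeries.coeff n (MvPowerSeries.monomial m (1 : A) * g m)
        = if m ≤ n then (if c (m + (n - m)) = m then
            MvPowerSeries.coeff (m + (n - m)) h else 0) else 0 := by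
      intro m
      rw [MvPowerSeries.coeff_monomial_mul]
      have : MvPowerSeries.coeff (n - m) (g m)
          = if c (m + (n - m)) = m then MvPowerSeries.coeff (m + (n - m)) h else 0 := by
        rw [MvPowerSeries.coeff_apply, hg]
      by_cases hmn : m ≤ n
      · rw [if_pos hmn, if_pos hmn, one_mul, this]
      · rw [if_neg hmn, if_neg hmn]
    by_cases hn : n ∈ supp
    · rw [Finset.sum_congr rfl (fun m _ => hterm m),
        Finset.sum_eq_single (c n)]
      · rw [if_pos (hcle n hn), add_tsub_cancel_of_le (hcle n hn), if_pos rfl]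
      · intro m hm hne'
        rw [Set.Finite.mem_toFinset] at hm
        split_ifs with h1 h2
        · exfalso
          rw [add_tsub_cancel_of_le h1] at h2
          exact hne' h2.symm
        · rfl
        · rfl
      · intro hnotin
        exfalso
        exact hnotin (Set.Finite.mem_toFinset hfin |>.mpr (hcmin n hn))
    · have hzero : MvPowerSeries.coeff n h = 0 := by
        by_contra hcontra; exact hn hcontra
      rw [hzero]
      rw [Finset.sum_congr rfl (fun m _ => hterm m)]
      refine (Finset.sum_eq_zero fun m _ => ?_).symm
      split_ifs with h1 h2
      · rw [add_tsub_cancel_of_le h1]; exact hzero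
      · rfl
      · rfl
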